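/- Let $(t_p)_{p\geq 0}$ be a strictly increasing sequence of natural numbers and let $g$ be a measurable function on the sample space with $\mathbb{E}[|g(Y_1)|] < \infty$, where $(Y_t)_{t\geq 1}$ are i.i.d. random variables. Then for every $\delta > 1$, $\mathbb{P}\Big(\max_{0 < i \leq p} \frac{1}{t_i - t_{i-1}}\Big|\sum_{s=t_{i-1}+1}^{t_i} (g(Y_s) - \mathbb{E}[g(Y_1)])\Big| \geq t_p^{\delta}\Big) \to 0$ as $p \to \infty$. -/

import Mathlib

open MeasureTheory ProbabilityTheory Filter

/-- For an i.i.d. sequence `(Y_t)` and an integrable function `g`, and a strictly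
increasing sequence `(t_p)` of naturals, for every `δ > 1` the probability that the maximum over
`0 < i ≤ p` of the normalized block sums `(t_i - t_{i-1})⁻¹ |∑_{s=t_{i-1}+1}^{t_i} (g(Y_s) - E[g(Y_1)])|`
exceeds `t_p ^ δ` tends to `0` as `p → ∞`. -/
theorem stmt_0 {Ω 𝓨 : Type*} [MeasurableSpace Ω] [MeasurableSpace 𝓨]
    (P : Measure Ω) [IsProbabilityMeasure P]
    (Y : ℕ → Ω → 𝓨) (hYmeas : ∀ s, Measurable (Y s))
    (hindep : iIndepFun Y P)
    (hident : ∀ s, Measure.map (Y s) P = Measure.map (Y 1) P)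
    (g : 𝓨 → ℝ) (hg : Measurable g)
    (hgint : Integrable (fun ω => g (Y 1 ω)) P)
    (t : ℕ → ℕ) (ht : StrictMono t)
    (δ : ℝ) (hδ : 1 < δ) :
    Tendsto (fun p =>
        P {ω | ∃ i ∈ Finset.Icc 1 p,
            ((t p : ℝ)) ^ δ ≤
              (1 / ((t i : ℝ) - (t (i - 1) : ℝ))) *
                |∑ s ∈ Finset.Ioc (t (i - 1)) (t i), (g (Y s ω) - ∫ ω', g (Y 1 ω') ∂P)|})
      atTop (nhds 0) := by
  set m : ℝ := ∫ ω', g (Y 1 ω') ∂P with hm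
  set C : ℝ := ∫ ω, |g (Y 1 ω) - m| ∂P with hC
  have hC0 : 0 ≤ C := integral_nonneg fun ω => abs_nonneg _
  -- integrability of g ∘ Y s
  have hint : ∀ s, Integrable (fun ω => g (Y s ω)) P := by
    intro s
    have h1 : Integrable g (Measure.map (Y 1) P) :=
      (integrable_map_measure hg.aestronglyMeasurable (hYmeas 1).aemeasurable).mpr hgint
    rw [← hident s] at h1
    exact (integrable_map_measure hg.aestronglyMeasurable (hYmeas s).aemeasurable).mp h1
  have habs_int : ∀ s, Integrable (fun ω => |g (Y s ω) - m|) P :=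
    fun s => ((hint s).sub (integrable_const m)).abs
  have habs_eq : ∀ s, ∫ ω, |g (Y s ω) - m| ∂P = C := by
    intro s
    have h1 : ∫ ω, |g (Y s ω) - m| ∂P = ∫ y, |g y - m| ∂(Measure.map (Y s) P) :=
      (integral_map (hYmeas s).aemeasurable
        ((hg.sub measurable_const).abs).aestronglyMeasurable).symm
    rw [h1, hident s]
    exact integral_map (hYmeas 1).aemeasurable
        ((hg.sub measurable_const).abs).aestronglyMeasurable
  -- the key bound on probabilities
  have key : ∀ p : ℕ, 1 ≤ p →
      P {ω | ∃ i ∈ Finset.Icc 1 p,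
          ((t p : ℝ)) ^ δ ≤
            (1 / ((t i : ℝ) - (t (i - 1) : ℝ))) *
              |∑ s ∈ Finset.Ioc (t (i - 1)) (t i), (g (Y s ω) - m)|}
        ≤ ENNReal.ofReal (C * (p : ℝ) ^ (1 - δ)) := by
    intro p hp
    have hp0 : (0:ℝ) < (p:ℝ) := by exact_mod_cast hp
    have htp : (p:ℝ) ≤ (t p : ℝ) := by exact_mod_cast ht.le_apply
    have ha0 : (0:ℝ) < (t p : ℝ) ^ δ :=
      Real.rpow_pos_of_pos (lt_of_lt_of_le hp0 htp) δ
    have hsub : {ω | ∃ i ∈ Finset.Icc 1 p,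
          ((t p : ℝ)) ^ δ ≤
            (1 / ((t i : ℝ) - (t (i - 1) : ℝ))) *
              |∑ s ∈ Finset.Ioc (t (i - 1)) (t i), (g (Y s ω) - m)|}
        ⊆ ⋃ i ∈ Finset.Icc 1 p, {ω |
          ((t p : ℝ)) ^ δ ≤
            (1 / ((t i : ℝ) - (t (i - 1) : ℝ))) *
              |∑ s ∈ Finset.Ioc (t (i - 1)) (t i), (g (Y s ω) - m)|} := by
      intro ω hω
      obtain ⟨i, hi, hωi⟩ := hω
      exact Set.mem_biUnion hi hωi
    refine (le_trans (measure_mono hsub) ((measure_biUnion_finset_le _ _).trans ?_))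
    have hbound : ∀ i ∈ Finset.Icc 1 p,
        P {ω | ((t p : ℝ)) ^ δ ≤
            (1 / ((t i : ℝ) - (t (i - 1) : ℝ))) *
              |∑ s ∈ Finset.Ioc (t (i - 1)) (t i), (g (Y s ω) - m)|}
          ≤ ENNReal.ofReal (C / (p:ℝ) ^ δ) := by
      intro i hi
      simp only [Finset.mem_Icc] at hi
      have hti : t (i - 1) < t i := ht (by omega)
      have hΔ : (0:ℝ) < (t i : ℝ) - (t (i - 1) : ℝ) := by
        have h : ((t (i - 1) : ℕ) : ℝ) < ((t i : ℕ) : ℝ) := by exact_mod_cast hti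
        linarith
      set f : Ω → ℝ := fun ω =>
        (1 / ((t i : ℝ) - (t (i - 1) : ℝ))) *
          |∑ s ∈ Finset.Ioc (t (i - 1)) (t i), (g (Y s ω) - m)| with hf
      have hf_nonneg : 0 ≤ᵐ[P] f :=
        Filter.Eventually.of_forall fun ω =>
          mul_nonneg (by positivity) (abs_nonneg _)
      have hS_int : Integrable
          (fun ω => ∑ s ∈ Finset.Ioc (t (i - 1)) (t i), (g (Y s ω) - m)) P :=
        integrable_finset_sum _ fun s _ => (hint s).sub (integrable_const m)
      have hf_int : Integrable f P := (hS_int.abs.const_mul _)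
      have hfint_le : ∫ ω, f ω ∂P ≤ C := by
        have h1 : ∫ ω, f ω ∂P =
            (1 / ((t i : ℝ) - (t (i - 1) : ℝ))) *
              ∫ ω, |∑ s ∈ Finset.Ioc (t (i - 1)) (t i), (g (Y s ω) - m)| ∂P :=
          integral_const_mul _ _
        have h2 : ∫ ω, |∑ s ∈ Finset.Ioc (t (i - 1)) (t i), (g (Y s ω) - m)| ∂P
            ≤ ∑ s ∈ Finset.Ioc (t (i - 1)) (t i), ∫ ω, |g (Y s ω) - m| ∂P := by
          rw [← integral_finset_sum _ fun s _ => habs_int s]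
          exact integral_mono hS_int.abs
            (integrable_finset_sum _ fun s _ => habs_int s)
            (fun ω => Finset.abs_sum_le_sum_abs _ _)
        have h3 : ∑ s ∈ Finset.Ioc (t (i - 1)) (t i), ∫ ω, |g (Y s ω) - m| ∂P
            = ((t i : ℝ) - (t (i - 1) : ℝ)) * C := by
          rw [Finset.sum_congr rfl fun s _ => habs_eq s, Finset.sum_const,
            Nat.card_Ioc, nsmul_eq_mul]
          congr 1
          push_cast [Nat.cast_sub hti.le]
          ring
        rw [h1]
        calc (1 / ((t i : ℝ) - (t (i - 1) : ℝ))) *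
              ∫ ω, |∑ s ∈ Finset.Ioc (t (i - 1)) (t i), (g (Y s ω) - m)| ∂P
            ≤ (1 / ((t i : ℝ) - (t (i - 1) : ℝ))) *
              (((t i : ℝ) - (t (i - 1) : ℝ)) * C) := by
              apply mul_le_mul_of_nonneg_left (h2.trans h3.le) (by positivity)
          _ = C := by field_simp
      have hmarkov := mul_meas_ge_le_integral_of_nonneg hf_nonneg hf_int ((t p : ℝ) ^ δ)
      have hPle : (P {ω | (t p : ℝ) ^ δ ≤ f ω}).toReal ≤ C / ((t p : ℝ) ^ δ) := by
        rw [le_div_iff₀ ha0]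
        calc (P {ω | (t p : ℝ) ^ δ ≤ f ω}).toReal * ((t p : ℝ) ^ δ)
            = ((t p : ℝ) ^ δ) * (P {ω | (t p : ℝ) ^ δ ≤ f ω}).toReal := mul_comm _ _
          _ ≤ ∫ ω, f ω ∂P := hmarkov
          _ ≤ C := hfint_le
      have hple : C / ((t p : ℝ) ^ δ) ≤ C / ((p:ℝ) ^ δ) := by
        apply div_le_div_of_nonneg_left hC0 (Real.rpow_pos_of_pos hp0 δ) ?_
        exact Real.rpow_le_rpow hp0.le htp (by linarith)
      refine (ENNReal.le_ofReal_iff_toReal_le (measure_ne_top P _) ?_).mpr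
        (hPle.trans hple)
      positivity
    calc ∑ i ∈ Finset.Icc 1 p, P {ω | ((t p : ℝ)) ^ δ ≤
            (1 / ((t i : ℝ) - (t (i - 1) : ℝ))) *
              |∑ s ∈ Finset.Ioc (t (i - 1)) (t i), (g (Y s ω) - m)|}
        ≤ ∑ i ∈ Finset.Icc 1 p, ENNReal.ofReal (C / (p:ℝ) ^ δ) :=
          Finset.sum_le_sum hbound
      _ = p * ENNReal.ofReal (C / (p:ℝ) ^ δ) := by
          rw [Finset.sum_const, Nat.card_Icc]
          simp [nsmul_eq_mul]
      _ = ENNReal.ofReal ((p:ℝ) * (C / (p:ℝ) ^ δ)) := by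
          rw [ENNReal.ofReal_mul (by positivity)]
          simp [ENNReal.ofReal_natCast]
      _ = ENNReal.ofReal (C * (p : ℝ) ^ (1 - δ)) := by
          congr 1
          rw [Real.rpow_sub hp0, Real.rpow_one]
          field_simp
  -- conclude
  have hbnd : Tendsto (fun p : ℕ => ENNReal.ofReal (C * (p : ℝ) ^ (1 - δ)))
      atTop (nhds 0) := by
    have h1 : Tendsto (fun p : ℕ => C * (p : ℝ) ^ (1 - δ)) atTop (nhds 0) := by
      have h2 : Tendsto (fun x : ℝ => x ^ (-(δ - 1))) atTop (nhds 0) :=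
        tendsto_rpow_neg_atTop (by linarith)
      have h3 : Tendsto (fun p : ℕ => ((p:ℝ)) ^ (1 - δ)) atTop (nhds 0) := by
        have := h2.comp tendsto_natCast_atTop_atTop (α := ℕ)
        simpa [Function.comp_def, neg_sub] using this
      simpa using h3.const_mul C
    have := (ENNReal.tendsto_ofReal h1)
    simpa using this
  refine tendsto_of_tendsto_of_tendsto_of_le_of_le' tendsto_const_nhds hbnd
    (Filter.Eventually.of_forall fun p => zero_le) ?_
  filter_upwards [Filter.eventually_ge_atTop 1] with p hp
  exact key p hp
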